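/- Let X be a real normed vector space, let k ≥ 2 and r ≥ 1 be integers, and let Q_1, …, Q_r be pairwise disjoint finite sets in X, each of size k. Then for ANY partition {P_1, …, P_k} of the union P = Q_1 ∪ ⋯ ∪ Q_r with |P_i ∩ Q_j| = 1 for all i ∈ {1,…,k} and j ∈ {1,…,r}, the centroid c(P_i) of each part satisfies ‖c(P_i) − c(P)‖ ≤ ((k−1)/k)·max_{j ∈ [r]} diam Q_j; consequently the closed ball centered at c(P) of radius ((k−1)/k)·max_{j ∈ [r]} diam Q_j intersects the convex hull of P_i for every i. -/

import Mathlib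

/-- The centroid of a finite point set `S`: `c(S) = (1/|S|)·∑_{p ∈ S} p`. -/
noncomputable def centroid {X : Type*} [AddCommGroup X] [Module ℝ X] (S : Finset X) : X :=
  ((S.card : ℝ))⁻¹ • ∑ p ∈ S, p

lemma point_sub_avg_le {X : Type*} [NormedAddCommGroup X] [NormedSpace ℝ X] [DecidableEq X]
    {S : Finset X} {a : X} (ha : a ∈ S) {k : ℕ} (hcard : S.card = k) (hk : 2 ≤ k) :
    ‖a - (k:ℝ)⁻¹ • ∑ q ∈ S, q‖ ≤ ((k:ℝ)-1)/k * Metric.diam (↑S : Set X) := by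
  have hk0 : (0:ℝ) < k := by exact_mod_cast lt_of_lt_of_le two_pos hk
  have key : a - (k:ℝ)⁻¹ • ∑ q ∈ S, q = (k:ℝ)⁻¹ • ∑ q ∈ S, (a - q) := by
    rw [Finset.sum_sub_distrib, Finset.sum_const, hcard, smul_sub,
      ← Nat.cast_smul_eq_nsmul ℝ, inv_smul_smul₀ (ne_of_gt hk0)]
  rw [key, ← Finset.sum_erase S (f := fun q => a - q) (sub_self a), norm_smul,
    norm_inv, Real.norm_natCast]
  have hbd : ∀ q ∈ S.erase a, ‖a - q‖ ≤ Metric.diam (↑S : Set X) := by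
    intro q hq
    rw [← dist_eq_norm]
    exact Metric.dist_le_diam_of_mem (S.finite_toSet.isBounded) ha (Finset.mem_erase.mp hq).2
  calc ((k:ℝ))⁻¹ * ‖∑ q ∈ S.erase a, (a - q)‖
      ≤ (k:ℝ)⁻¹ * ∑ q ∈ S.erase a, ‖a - q‖ := by
        gcongr; exact norm_sum_le _ _
    _ ≤ (k:ℝ)⁻¹ * ((S.erase a).card * Metric.diam (↑S : Set X)) := by
        gcongr
        exact Finset.sum_le_card_nsmul _ _ _ hbd |>.trans_eq (by simp [nsmul_eq_mul])
    _ = ((k:ℝ)-1)/k * Metric.diam (↑S : Set X) := by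
        rw [Finset.card_erase_of_mem ha, hcard]
        have : ((k-1:ℕ):ℝ) = (k:ℝ) - 1 := by
          have : 1 ≤ k := le_trans one_le_two hk
          push_cast [this]; ring
        rw [this]; ring

/-- **Bohnenblust-type bound for transversal partitions in normed spaces.**
Let `X` be a real normed vector space and let `Q_1, …, Q_r` be pairwise disjoint
finite sets in `X`, each of size `k ≥ 2`. Then for ANY transversal partition
`{P_1, …, P_k}` of the union `P` (with `|P_i ∩ Q_j| = 1` for all `i, j`), each
centroid satisfies `‖c(P_i) − c(P)‖ ≤ ((k−1)/k)·max_j diam Q_j`; consequently the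
closed ball centered at `c(P)` of radius `((k−1)/k)·max_j diam Q_j` intersects the
convex hull of every part. -/
theorem centroid_bound_any_transversal_partition
    {X : Type*} [NormedAddCommGroup X] [NormedSpace ℝ X] [DecidableEq X]
    (k r : ℕ) (hk : 2 ≤ k) (hr : 1 ≤ r)
    (Q : Fin r → Finset X) (hcard : ∀ j, (Q j).card = k)
    (hdisj : ∀ j j', j ≠ j' → Disjoint (Q j) (Q j'))
    (Pparts : Fin k → Finset X)
    (hpdisj : ∀ i i', i ≠ i' → Disjoint (Pparts i) (Pparts i'))
    (hunion : Finset.univ.biUnion Pparts = Finset.univ.biUnion Q)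
    (htrans : ∀ i j, (Pparts i ∩ Q j).card = 1) :
    (∀ i, ‖centroid (Pparts i) - centroid (Finset.univ.biUnion Q)‖ ≤
        ((k : ℝ) - 1) / (k : ℝ) * ⨆ j, Metric.diam (↑(Q j) : Set X)) ∧
    (∀ i, ∃ p ∈ convexHull ℝ (↑(Pparts i) : Set X),
        dist p (centroid (Finset.univ.biUnion Q)) ≤
          ((k : ℝ) - 1) / (k : ℝ) * ⨆ j, Metric.diam (↑(Q j) : Set X)) := by
  have hk0 : (0:ℝ) < k := by exact_mod_cast lt_of_lt_of_le two_pos hk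
  have hr0 : (0:ℝ) < r := by exact_mod_cast hr
  haveI : NeZero r := ⟨by omega⟩
  -- facts about the union P
  have hQpd : (↑(Finset.univ : Finset (Fin r)) : Set (Fin r)).PairwiseDisjoint Q := by
    intro j _ j' _ h; exact hdisj j j' h
  have hPcard : (Finset.univ.biUnion Q).card = r * k := by
    rw [Finset.card_biUnion (fun j _ j' _ h => hdisj j j' h)]
    simp [hcard, Finset.sum_const]
  have hPsum : ∑ p ∈ Finset.univ.biUnion Q, p = ∑ j, ∑ q ∈ Q j, q :=
    Finset.sum_biUnion hQpd
  -- supremum facts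
  set D := ⨆ j, Metric.diam (↑(Q j) : Set X) with hD
  have hDle : ∀ j, Metric.diam (↑(Q j) : Set X) ≤ D :=
    fun j => le_ciSup (f := fun j => Metric.diam (↑(Q j) : Set X)) (Finite.bddAbove_range _) j
  have hD0 : 0 ≤ D := le_trans Metric.diam_nonneg (hDle ⟨0, hr⟩)
  -- main bound
  have main : ∀ i, ‖centroid (Pparts i) - centroid (Finset.univ.biUnion Q)‖ ≤
      ((k : ℝ) - 1) / (k : ℝ) * D := by
    intro i
    choose a ha using fun j => Finset.card_eq_one.mp (htrans i j)
    have haj : ∀ j, a j ∈ Pparts i ∩ Q j := fun j => by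
      rw [ha j]; exact Finset.mem_singleton_self _
    have hPi : Pparts i = Finset.univ.biUnion (fun j => {a j}) := by
      ext x
      simp only [Finset.mem_biUnion, Finset.mem_univ, Finset.mem_singleton, true_and]
      constructor
      · intro hx
        have hx' : x ∈ Finset.univ.biUnion Q := by
          rw [← hunion]; exact Finset.mem_biUnion.mpr ⟨i, Finset.mem_univ _, hx⟩
        obtain ⟨j, -, hxj⟩ := Finset.mem_biUnion.mp hx'
        refine ⟨j, ?_⟩
        have : x ∈ Pparts i ∩ Q j := Finset.mem_inter.mpr ⟨hx, hxj⟩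
        rw [ha j] at this; exact Finset.mem_singleton.mp this
      · rintro ⟨j, rfl⟩; exact (Finset.mem_inter.mp (haj j)).1
    have hsingpd : (↑(Finset.univ : Finset (Fin r)) : Set (Fin r)).PairwiseDisjoint
        (fun j => ({a j} : Finset X)) := by
      intro j _ j' _ h
      have h1 : a j ∈ Q j := (Finset.mem_inter.mp (haj j)).2
      have h2 : a j' ∈ Q j' := (Finset.mem_inter.mp (haj j')).2
      have hne : a j ≠ a j' := fun heq =>
        Finset.disjoint_left.mp (hdisj j j' h) h1 (by rw [heq]; exact h2)
      simp [Finset.disjoint_singleton, hne, hne.symm]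
    have hPicard : (Pparts i).card = r := by
      rw [hPi, Finset.card_biUnion (fun j _ j' _ h => hsingpd (by simp) (by simp) h)]
      simp
    have hPisum : ∑ p ∈ Pparts i, p = ∑ j, a j := by
      rw [hPi, Finset.sum_biUnion hsingpd]; simp
    have hdiff : centroid (Pparts i) - centroid (Finset.univ.biUnion Q) =
        (r:ℝ)⁻¹ • ∑ j, (a j - (k:ℝ)⁻¹ • ∑ q ∈ Q j, q) := by
      rw [centroid, centroid, hPicard, hPisum, hPcard, hPsum,
        Finset.sum_sub_distrib, smul_sub, ← Finset.smul_sum, smul_smul]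
      push_cast
      rw [mul_inv]
    rw [hdiff, norm_smul, norm_inv, Real.norm_natCast]
    calc ((r:ℝ))⁻¹ * ‖∑ j, (a j - (k:ℝ)⁻¹ • ∑ q ∈ Q j, q)‖
        ≤ (r:ℝ)⁻¹ * ∑ j, ‖a j - (k:ℝ)⁻¹ • ∑ q ∈ Q j, q‖ := by
          gcongr; exact norm_sum_le _ _
      _ ≤ (r:ℝ)⁻¹ * ∑ j : Fin r, ((k:ℝ)-1)/k * D := by
          gcongr with j hj
          exact le_trans
            (point_sub_avg_le (Finset.mem_inter.mp (haj j)).2 (hcard j) hk)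
            (mul_le_mul_of_nonneg_left (hDle j) (div_nonneg (by linarith [show (2:ℝ) ≤ (k:ℝ) from by exact_mod_cast hk]) hk0.le))
      _ = ((k:ℝ)-1)/k * D := by
          rw [Finset.sum_const, Finset.card_univ, Fintype.card_fin, nsmul_eq_mul]
          field_simp
  refine ⟨main, fun i => ?_⟩
  refine ⟨centroid (Pparts i), ?_, by rw [dist_eq_norm]; exact main i⟩
  have hne : (Pparts i).Nonempty := by
    have := htrans i ⟨0, hr⟩
    rcases Finset.card_eq_one.mp this with ⟨x, hx⟩
    exact ⟨x, (Finset.mem_inter.mp (hx ▸ Finset.mem_singleton_self x)).1⟩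
  have : centroid (Pparts i) = (Pparts i).centerMass (fun _ => (1:ℝ)) id := by
    rw [Finset.centerMass, centroid]
    simp
  rw [this]
  exact Finset.centerMass_mem_convexHull _ (fun _ _ => zero_le_one)
    (by simpa using Finset.card_pos.mpr hne) (fun x hx => hx)
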